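/- For weak compositions a and b of the same length, b is obtainable from a by a (possibly empty) sequence of left swaps if and only if the skyline diagram D(b) is obtainable from D(a) by a (possibly empty) sequence of Kohnert moves. -/

import Mathlib

def skyline (a : List ℕ) : Finset (ℕ × ℕ) :=
  (Finset.range a.length).biUnion fun i =>
    (Finset.range (a.getD i 0)).image fun j => (i + 1, j + 1)
def KMove (K K' : Finset (ℕ × ℕ)) : Prop :=
  ∃ r c r', (r, c) ∈ K ∧ (∀ c', (r, c') ∈ K → c' ≤ c) ∧
    1 ≤ r' ∧ r' < r ∧ (r', c) ∉ K ∧ (∀ s, r' < s → s < r → (s, c) ∈ K) ∧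
    K' = insert (r', c) (K.erase (r, c))
def LSwapStep (a b : List ℕ) : Prop :=
  ∃ i j, i < j ∧ j < a.length ∧ a.getD i 0 ≤ a.getD j 0 ∧
    b = (a.set i (a.getD j 0)).set j (a.getD i 0)

namespace Stmt3Aux


lemma mem_skyline {a : List ℕ} {x y : ℕ} :
    (x, y) ∈ skyline a ↔ 1 ≤ x ∧ x ≤ a.length ∧ 1 ≤ y ∧ y ≤ a.getD (x - 1) 0 := by
  simp only [skyline, Finset.mem_biUnion, Finset.mem_range, Finset.mem_image, Prod.mk.injEq]
  constructor
  · rintro ⟨i, hi, j, hj, hx, hy⟩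
    have : x - 1 = i := by omega
    subst this
    exact ⟨by omega, by omega, by omega, by omega⟩
  · rintro ⟨h1, h2, h3, h4⟩
    exact ⟨x - 1, by omega, y - 1, by omega, by omega, by omega⟩

def Dg (a : List ℕ) (i j c s : ℕ) : Finset (ℕ × ℕ) :=
  (((skyline a).filter (fun p => ¬(p.1 = j + 1 ∧ c ≤ p.2))) ∪
    ((Finset.Ioc c (a.getD j 0)).image fun d => (i + 1, d))) ∪ {(s, c)}

lemma mem_Dg {a : List ℕ} {i j c s x y : ℕ} :
    (x, y) ∈ Dg a i j c s ↔
      ((1 ≤ x ∧ x ≤ a.length ∧ 1 ≤ y ∧ y ≤ a.getD (x - 1) 0) ∧ ¬(x = j + 1 ∧ c ≤ y)) ∨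
      (x = i + 1 ∧ c < y ∧ y ≤ a.getD j 0) ∨ (x = s ∧ y = c) := by
  simp only [Dg, Finset.mem_union, Finset.mem_filter, Finset.mem_image, Finset.mem_Ioc,
    Finset.mem_singleton, mem_skyline, Prod.mk.injEq]
  constructor
  · rintro ((⟨h1, h2⟩ | ⟨d, hd, hd2, hd3⟩) | ⟨h1, h2⟩)
    · exact Or.inl ⟨h1, h2⟩
    · exact Or.inr (Or.inl ⟨hd2.symm, by omega, by omega⟩)
    · exact Or.inr (Or.inr ⟨h1, h2⟩)
  · rintro (⟨h1, h2⟩ | ⟨h1, h2, h3⟩ | ⟨h1, h2⟩)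
    · exact Or.inl (Or.inl ⟨h1, h2⟩)
    · exact Or.inl (Or.inr ⟨y, ⟨h2, h3⟩, h1.symm, rfl⟩)
    · exact Or.inr ⟨h1, h2⟩

lemma hop {a : List ℕ} {i j c s s' : ℕ} (hij : i < j) (hjn : j < a.length)
    (hc1 : a.getD i 0 < c) (hc2 : c ≤ a.getD j 0)
    (h1 : i + 1 ≤ s') (h2 : s' < s) (h3 : s ≤ j + 1)
    (hs : s = j + 1 ∨ a.getD (s - 1) 0 < c)
    (hs' : s' = i + 1 ∨ a.getD (s' - 1) 0 < c)
    (hmid : ∀ t, s' < t → t < s → c ≤ a.getD (t - 1) 0) :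
    KMove (Dg a i j c s) (Dg a i j c s') := by
  refine ⟨s, c, s', ?_, ?_, by omega, h2, ?_, ?_, ?_⟩
  · rw [mem_Dg]; exact Or.inr (Or.inr ⟨rfl, rfl⟩)
  · intro c' hc'
    rw [mem_Dg] at hc'
    rcases hc' with ⟨⟨hx1, hx2, hy1, hy2⟩, hnot⟩ | ⟨hx, hy1, hy2⟩ | ⟨_, rfl⟩
    · rcases hs with rfl | hlt
      · omega
      · omega
    · omega
    · omega
  · rw [mem_Dg]
    rintro (⟨⟨hx1, hx2, hy1, hy2⟩, hnot⟩ | ⟨hx, hy1, hy2⟩ | ⟨he1, he2⟩)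
    · rcases hs' with he | hlt
      · subst he
        simp only [Nat.add_sub_cancel] at hy2
        omega
      · omega
    · omega
    · omega
  · intro t ht1 ht2
    rw [mem_Dg]
    have hm := hmid t ht1 ht2
    exact Or.inl ⟨⟨by omega, by omega, by omega, hm⟩, by omega⟩
  · ext ⟨x, y⟩
    simp only [Finset.mem_insert, Finset.mem_erase, mem_Dg, ne_eq, Prod.mk.injEq]
    constructor
    · rintro (⟨hsky, hnot⟩ | ⟨hx, hy1, hy2⟩ | ⟨rfl, rfl⟩)
      · refine Or.inr ⟨?_, Or.inl ⟨hsky, hnot⟩⟩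
        rintro ⟨rfl, rfl⟩
        rcases hs with he | hlt
        · exact hnot ⟨he, le_refl _⟩
        · omega
      · refine Or.inr ⟨?_, Or.inr (Or.inl ⟨hx, hy1, hy2⟩)⟩
        omega
      · exact Or.inl ⟨rfl, rfl⟩
    · rintro (⟨rfl, rfl⟩ | ⟨hne, (⟨hsky, hnot⟩ | ⟨hx, hy1, hy2⟩ | ⟨rfl, rfl⟩)⟩)
      · exact Or.inr (Or.inr ⟨rfl, rfl⟩)
      · exact Or.inl ⟨hsky, hnot⟩
      · exact Or.inr (Or.inl ⟨hx, hy1, hy2⟩)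
      · exact absurd ⟨rfl, rfl⟩ hne

lemma descend {a : List ℕ} {i j c : ℕ} (hij : i < j) (hjn : j < a.length)
    (hc1 : a.getD i 0 < c) (hc2 : c ≤ a.getD j 0) :
    ∀ s, i + 1 ≤ s → s ≤ j + 1 → (s = j + 1 ∨ a.getD (s - 1) 0 < c) →
      Relation.ReflTransGen KMove (Dg a i j c s) (Dg a i j c (i + 1)) := by
  intro s
  induction s using Nat.strong_induction_on with
  | _ s IH =>
    intro hs1 hs2 hs3
    rcases eq_or_lt_of_le hs1 with heq | hlt
    · rw [← heq]
    · set P : ℕ → Prop := fun t => t = i + 1 ∨ a.getD (t - 1) 0 < c with hP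
      have hPdec : DecidablePred P := fun t => by unfold P; infer_instance
      have hPi : P (i + 1) := Or.inl rfl
      have hm : i + 1 ≤ s - 1 := by omega
      have hge : i + 1 ≤ Nat.findGreatest P (s - 1) := Nat.le_findGreatest hm hPi
      have hle : Nat.findGreatest P (s - 1) ≤ s - 1 := Nat.findGreatest_le _
      have hPs' : P (Nat.findGreatest P (s - 1)) := Nat.findGreatest_spec hm hPi
      set s' := Nat.findGreatest P (s - 1) with hs'def
      have hmid : ∀ t, s' < t → t < s → c ≤ a.getD (t - 1) 0 := by
        intro t ht1 ht2
        by_contra hcon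
        push_neg at hcon
        have hPt : P t := Or.inr hcon
        exact Nat.findGreatest_is_greatest ht1 (by omega) hPt
      have hs'3 : s' = j + 1 ∨ a.getD (s' - 1) 0 < c := by
        rcases hPs' with he | hlt2
        · right; rw [he]; simpa using hc1
        · right; exact hlt2
      exact Relation.ReflTransGen.head
        (hop hij hjn hc1 hc2 hge (by omega) hs2 hs3 hPs' hmid)
        (IH s' (by omega) hge (by omega) hs'3)

lemma Dg_start {a : List ℕ} {i j : ℕ} (hij : i < j) (hjn : j < a.length)
    (hvij : a.getD i 0 < a.getD j 0) :
    Dg a i j (a.getD j 0) (j + 1) = skyline a := by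
  ext ⟨x, y⟩
  rw [mem_Dg, mem_skyline]
  by_cases hx : x = j + 1
  · subst hx
    simp only [Nat.add_sub_cancel, eq_self_iff_true, true_and, and_true, not_true, not_and,
      not_le, true_iff, iff_true]
    omega
  · omega

lemma Dg_step {a : List ℕ} {i j c : ℕ} (hij : i < j) (hjn : j < a.length)
    (hc1 : a.getD i 0 + 1 < c) (hc2 : c ≤ a.getD j 0) :
    Dg a i j c (i + 1) = Dg a i j (c - 1) (j + 1) := by
  ext ⟨x, y⟩
  rw [mem_Dg, mem_Dg]
  by_cases hx : x = j + 1
  · subst hx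
    simp only [Nat.add_sub_cancel, eq_self_iff_true, true_and, and_true, not_true, not_and,
      not_le, true_iff, iff_true]
    omega
  · by_cases hx2 : x = i + 1
    · subst hx2
      simp only [Nat.add_sub_cancel, eq_self_iff_true, true_and, and_true, not_true, not_and,
        not_le, true_iff, iff_true]
      omega
    · omega

lemma getD_set' {l : List ℕ} {i : ℕ} (hi : i < l.length) (x : ℕ) (s : ℕ) :
    (l.set i x).getD s 0 = if s = i then x else l.getD s 0 := by
  rcases eq_or_ne s i with rfl | h
  · simp [List.getD_eq_getElem?_getD, List.getElem?_set_self, hi]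
  · simp [List.getD_eq_getElem?_getD, List.getElem?_set_ne h.symm, h]

lemma set_getD_self {l : List ℕ} {i : ℕ} (h : i < l.length) : l.set i (l.getD i 0) = l := by
  apply List.ext_getElem?
  intro n
  rcases eq_or_ne n i with rfl | hne
  · rw [List.getElem?_set_self (by omega)]
    rw [List.getD_eq_getElem?_getD, List.getElem?_eq_getElem h]
    rfl
  · rw [List.getElem?_set_ne hne.symm]

lemma Dg_end {a : List ℕ} {i j : ℕ} (hij : i < j) (hjn : j < a.length)
    (hvij : a.getD i 0 < a.getD j 0) :
    Dg a i j (a.getD i 0 + 1) (i + 1)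
      = skyline ((a.set i (a.getD j 0)).set j (a.getD i 0)) := by
  have hlen : ((a.set i (a.getD j 0)).set j (a.getD i 0)).length = a.length := by simp
  have hgb : ∀ t : ℕ, ((a.set i (a.getD j 0)).set j (a.getD i 0)).getD t 0
      = if t = j then a.getD i 0 else if t = i then a.getD j 0 else a.getD t 0 := by
    intro t
    rw [getD_set' (by simpa using hjn), getD_set' (by omega)]
  ext ⟨x, y⟩
  rw [mem_Dg, mem_skyline, hlen, hgb (x - 1)]
  split_ifs with h1 h2
  · rw [h1]
    omega
  · rw [h2]
    omega
  · omega

lemma swap_to_kmoves {a b : List ℕ} (h : LSwapStep a b) :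
    Relation.ReflTransGen KMove (skyline a) (skyline b) := by
  obtain ⟨i, j, hij, hjn, hle, rfl⟩ := h
  rcases eq_or_lt_of_le hle with heq | hlt
  · have e1 : a.set i (a.getD j 0) = a := by
      rw [← heq]; exact set_getD_self (by omega)
    rw [e1, heq, set_getD_self hjn]
  · have main : ∀ m, m ≤ a.getD j 0 - (a.getD i 0 + 1) →
        Relation.ReflTransGen KMove (skyline a) (Dg a i j (a.getD j 0 - m) (i + 1)) := by
      intro m
      induction m with
      | zero =>
        intro _
        rw [Nat.sub_zero, ← Dg_start hij hjn hlt]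
        exact descend hij hjn hlt (le_refl _) (j + 1) (by omega) (le_refl _) (Or.inl rfl)
      | succ m IH =>
        intro hm
        have h1 := IH (by omega)
        have he : Dg a i j (a.getD j 0 - m) (i + 1) = Dg a i j (a.getD j 0 - (m + 1)) (j + 1) := by
          have := Dg_step (a := a) (c := a.getD j 0 - m) hij hjn (by omega) (by omega)
          have he2 : a.getD j 0 - m - 1 = a.getD j 0 - (m + 1) := by omega
          rw [he2] at this
          exact this
        rw [he] at h1
        exact h1.trans (descend hij hjn (by omega) (by omega) (j + 1) (by omega) (le_refl _)
          (Or.inl rfl))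
    have hfin := main (a.getD j 0 - (a.getD i 0 + 1)) (le_refl _)
    have he3 : a.getD j 0 - (a.getD j 0 - (a.getD i 0 + 1)) = a.getD i 0 + 1 := by omega
    rw [he3, Dg_end hij hjn hlt] at hfin
    exact hfin



def cnt (a : List ℕ) (k c : ℕ) : ℕ :=
  ∑ t ∈ Finset.range k, if c ≤ a.getD t 0 then 1 else 0

def kcnt (K : Finset (ℕ × ℕ)) (k c : ℕ) : ℕ :=
  ∑ p ∈ K, if p.2 = c ∧ p.1 ≤ k then 1 else 0

def kctot (K : Finset (ℕ × ℕ)) (c : ℕ) : ℕ :=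
  ∑ p ∈ K, if p.2 = c then 1 else 0

lemma kmove_kcnt {K K' : Finset (ℕ × ℕ)} (h : KMove K K') (k c : ℕ) :
    kcnt K k c ≤ kcnt K' k c := by
  obtain ⟨r, c0, r', hmem, -, h1, h2, hnot, -, rfl⟩ := h
  have hni : (r', c0) ∉ K.erase (r, c0) := fun hx => hnot (Finset.mem_of_mem_erase hx)
  simp only [kcnt]
  rw [Finset.sum_insert hni, ← Finset.add_sum_erase K _ hmem]
  apply Nat.add_le_add_right
  simp only
  split_ifs <;> omega

lemma kmove_kctot {K K' : Finset (ℕ × ℕ)} (h : KMove K K') (c : ℕ) :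
    kctot K c = kctot K' c := by
  obtain ⟨r, c0, r', hmem, -, h1, h2, hnot, -, rfl⟩ := h
  have hni : (r', c0) ∉ K.erase (r, c0) := fun hx => hnot (Finset.mem_of_mem_erase hx)
  simp only [kctot]
  rw [Finset.sum_insert hni, ← Finset.add_sum_erase K _ hmem]

lemma sum_skyline (a : List ℕ) (f : ℕ × ℕ → ℕ) :
    ∑ p ∈ skyline a, f p
      = ∑ i ∈ Finset.range a.length, ∑ j ∈ Finset.range (a.getD i 0), f (i + 1, j + 1) := by
  rw [skyline, Finset.sum_biUnion]
  · apply Finset.sum_congr rfl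
    intro i _
    rw [Finset.sum_image]
    intro x _ y _ hxy
    simpa using hxy
  · intro i _ i' _ hne
    apply Finset.disjoint_left.2
    intro p hp hp'
    simp only [Finset.mem_image, Finset.mem_range] at hp hp'
    obtain ⟨x, -, rfl⟩ := hp
    obtain ⟨y, -, he⟩ := hp'
    have := congrArg Prod.fst he
    simp only at this
    exact hne (by omega)

lemma sum_ind (m c : ℕ) :
    (∑ j ∈ Finset.range m, if j + 1 = c then 1 else 0)
      = if 1 ≤ c ∧ c ≤ m then 1 else 0 := by
  induction m with
  | zero => rw [Finset.sum_range_zero]; split_ifs with h <;> omega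
  | succ m ih =>
    rw [Finset.sum_range_succ, ih]
    split_ifs <;> omega

lemma kcnt_skyline {a : List ℕ} {k c : ℕ} (hc : 1 ≤ c) (hk : k ≤ a.length) :
    kcnt (skyline a) k c = cnt a k c := by
  rw [kcnt, sum_skyline]
  have h1 : ∀ i ∈ Finset.range a.length,
      (∑ j ∈ Finset.range (a.getD i 0),
          if (i + 1, j + 1).2 = c ∧ (i + 1, j + 1).1 ≤ k then 1 else 0)
      = if 1 ≤ c ∧ c ≤ a.getD i 0 ∧ i + 1 ≤ k then 1 else 0 := by
    intro i _
    by_cases hik : i + 1 ≤ k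
    · simp only [hik, and_true]
      exact sum_ind _ _
    · simp [hik]
  rw [Finset.sum_congr rfl h1, cnt]
  rw [← Finset.sum_subset (Finset.range_subset_range.2 hk)]
  · apply Finset.sum_congr rfl
    intro i hi
    simp only [Finset.mem_range] at hi
    split_ifs <;> omega
  · intro x _ hx
    simp only [Finset.mem_range] at hx
    split_ifs <;> omega

lemma kctot_skyline {a : List ℕ} {c : ℕ} (hc : 1 ≤ c) :
    kctot (skyline a) c = cnt a a.length c := by
  rw [kctot, sum_skyline]
  have h1 : ∀ i ∈ Finset.range a.length,
      (∑ j ∈ Finset.range (a.getD i 0), if (i + 1, j + 1).2 = c then 1 else 0)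
      = if 1 ≤ c ∧ c ≤ a.getD i 0 then 1 else 0 := by
    intro i _
    exact sum_ind _ _
  rw [Finset.sum_congr rfl h1, cnt]
  apply Finset.sum_congr rfl
  intro i hi
  split_ifs <;> omega

lemma cnt_succ (a : List ℕ) (k c : ℕ) :
    cnt a (k + 1) c = cnt a k c + (if c ≤ a.getD k 0 then 1 else 0) :=
  Finset.sum_range_succ _ _

lemma cnt_split (a : List ℕ) {k1 k2 : ℕ} (c : ℕ) (h : k1 ≤ k2) :
    cnt a k2 c = cnt a k1 c + ∑ t ∈ Finset.Ico k1 k2, (if c ≤ a.getD t 0 then 1 else 0) := by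
  rw [cnt, cnt, Finset.range_eq_Ico, Finset.range_eq_Ico,
    ← Finset.sum_Ico_consecutive _ (Nat.zero_le k1) h]

lemma cnt_zero_col (a : List ℕ) (k : ℕ) : cnt a k 0 = k := by simp [cnt]

lemma cnt_high {a : List ℕ} {k c : ℕ} (hk : a.length ≤ k) :
    cnt a k c = cnt a a.length c + (if c = 0 then k - a.length else 0) := by
  rw [cnt_split a c hk]
  congr 1
  rcases Nat.eq_zero_or_pos c with rfl | hc
  · simp [Nat.card_Ico]
  · rw [if_neg (by omega)]
    apply Finset.sum_eq_zero
    intro t ht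
    simp only [Finset.mem_Ico] at ht
    rw [List.getD_eq_default _ _ (by omega), if_neg (by omega)]

lemma cnt_anti (a : List ℕ) (k : ℕ) {c c' : ℕ} (h : c ≤ c') : cnt a k c' ≤ cnt a k c := by
  apply Finset.sum_le_sum
  intro t _
  split_ifs <;> omega

lemma list_eq_of_getD {a b : List ℕ} (hlen : a.length = b.length)
    (h : ∀ t, a.getD t 0 = b.getD t 0) : a = b := by
  apply List.ext_getElem hlen
  intro n h1 h2
  have := h n
  rwa [List.getD_eq_getElem _ _ h1, List.getD_eq_getElem _ _ h2] at this

lemma cnt_swap {a : List ℕ} {t0 i : ℕ} (h1 : t0 < i) (h2 : i < a.length)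
    (hva : a.getD t0 0 ≤ a.getD i 0) (k c : ℕ) :
    cnt ((a.set t0 (a.getD i 0)).set i (a.getD t0 0)) k c
      = cnt a k c +
        (if t0 < k ∧ k ≤ i ∧ a.getD t0 0 < c ∧ c ≤ a.getD i 0 then 1 else 0) := by
  have hg : ∀ t, ((a.set t0 (a.getD i 0)).set i (a.getD t0 0)).getD t 0
      = if t = i then a.getD t0 0 else if t = t0 then a.getD i 0 else a.getD t 0 := by
    intro t
    rw [getD_set' (by simpa using h2), getD_set' (by omega)]
  have hgo : ∀ t, t ≠ i → t ≠ t0 →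
      ((a.set t0 (a.getD i 0)).set i (a.getD t0 0)).getD t 0 = a.getD t 0 := by
    intro t hti htt0
    rw [hg t, if_neg hti, if_neg htt0]
  have hgt0 : ((a.set t0 (a.getD i 0)).set i (a.getD t0 0)).getD t0 0 = a.getD i 0 := by
    rw [hg t0, if_neg (show ¬ t0 = i by omega), if_pos rfl]
  have hgi : ((a.set t0 (a.getD i 0)).set i (a.getD t0 0)).getD i 0 = a.getD t0 0 := by
    rw [hg i, if_pos rfl]
  rcases Nat.lt_or_ge k (t0 + 1) with hk | hk
  · rw [if_neg (by omega)]
    apply Finset.sum_congr rfl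
    intro t ht
    simp only [Finset.mem_range] at ht
    rw [hgo t (by omega) (by omega)]
  · rcases Nat.lt_or_ge i k with hik | hik
    · -- k > i : sums equal
      have ht0m : t0 ∈ Finset.range k := by simp only [Finset.mem_range]; omega
      have htim : i ∈ (Finset.range k).erase t0 := by
        simp only [Finset.mem_erase, Finset.mem_range]; omega
      have E1 : (if c ≤ ((a.set t0 (a.getD i 0)).set i (a.getD t0 0)).getD t0 0 then 1 else 0)
          + ((if c ≤ ((a.set t0 (a.getD i 0)).set i (a.getD t0 0)).getD i 0 then 1 else 0)
            + ∑ t ∈ ((Finset.range k).erase t0).erase i,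
                (if c ≤ ((a.set t0 (a.getD i 0)).set i (a.getD t0 0)).getD t 0 then 1 else 0))
          = cnt ((a.set t0 (a.getD i 0)).set i (a.getD t0 0)) k c := by
        rw [cnt,
          ← Finset.add_sum_erase _
            (fun t => if c ≤ ((a.set t0 (a.getD i 0)).set i (a.getD t0 0)).getD t 0
              then 1 else 0) ht0m,
          ← Finset.add_sum_erase _
            (fun t => if c ≤ ((a.set t0 (a.getD i 0)).set i (a.getD t0 0)).getD t 0
              then 1 else 0) htim]
      have E2 : (if c ≤ a.getD t0 0 then 1 else 0)
          + ((if c ≤ a.getD i 0 then 1 else 0)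
            + ∑ t ∈ ((Finset.range k).erase t0).erase i, (if c ≤ a.getD t 0 then 1 else 0))
          = cnt a k c := by
        rw [cnt,
          ← Finset.add_sum_erase _ (fun t => if c ≤ a.getD t 0 then 1 else 0) ht0m,
          ← Finset.add_sum_erase _ (fun t => if c ≤ a.getD t 0 then 1 else 0) htim]
      have he : ∑ t ∈ ((Finset.range k).erase t0).erase i,
            (if c ≤ ((a.set t0 (a.getD i 0)).set i (a.getD t0 0)).getD t 0 then 1 else 0)
          = ∑ t ∈ ((Finset.range k).erase t0).erase i, (if c ≤ a.getD t 0 then 1 else 0) := by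
        apply Finset.sum_congr rfl
        intro t ht
        simp only [Finset.mem_erase] at ht
        rw [hgo t ht.1 ht.2.1]
      rw [hgt0, hgi, he] at E1
      rw [if_neg (by omega)]
      omega
    · -- t0 < k ≤ i
      have ht0m : t0 ∈ Finset.range k := by simp only [Finset.mem_range]; omega
      have E1 : (if c ≤ ((a.set t0 (a.getD i 0)).set i (a.getD t0 0)).getD t0 0 then 1 else 0)
          + ∑ t ∈ (Finset.range k).erase t0,
              (if c ≤ ((a.set t0 (a.getD i 0)).set i (a.getD t0 0)).getD t 0 then 1 else 0)
          = cnt ((a.set t0 (a.getD i 0)).set i (a.getD t0 0)) k c := by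
        rw [cnt,
          ← Finset.add_sum_erase _
            (fun t => if c ≤ ((a.set t0 (a.getD i 0)).set i (a.getD t0 0)).getD t 0
              then 1 else 0) ht0m]
      have E2 : (if c ≤ a.getD t0 0 then 1 else 0)
          + ∑ t ∈ (Finset.range k).erase t0, (if c ≤ a.getD t 0 then 1 else 0)
          = cnt a k c := by
        rw [cnt, ← Finset.add_sum_erase _ (fun t => if c ≤ a.getD t 0 then 1 else 0) ht0m]
      have he : ∑ t ∈ (Finset.range k).erase t0,
            (if c ≤ ((a.set t0 (a.getD i 0)).set i (a.getD t0 0)).getD t 0 then 1 else 0)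
          = ∑ t ∈ (Finset.range k).erase t0, (if c ≤ a.getD t 0 then 1 else 0) := by
        apply Finset.sum_congr rfl
        intro t ht
        simp only [Finset.mem_erase, Finset.mem_range] at ht
        rw [hgo t (by omega) ht.1]
      rw [hgt0, he] at E1
      split_ifs with hcond
      · have hc1 : ¬ c ≤ a.getD t0 0 := by omega
        have hc2 : c ≤ a.getD i 0 := by omega
        rw [if_neg hc1] at E2
        rw [if_pos hc2] at E1
        omega
      · -- condition false: with t0 < k ≤ i known, either c ≤ vt or c > va
        have : (c ≤ a.getD t0 0 ∧ c ≤ a.getD i 0) ∨ (¬ c ≤ a.getD t0 0 ∧ ¬ c ≤ a.getD i 0) := by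
          omega
        rcases this with ⟨hc1, hc2⟩ | ⟨hc1, hc2⟩
        · rw [if_pos hc1] at E2
          rw [if_pos hc2] at E1
          omega
        · rw [if_neg hc1] at E2
          rw [if_neg hc2] at E1
          omega

lemma findGreatest_facts {P : ℕ → Prop} [DecidablePred P] {n m : ℕ} (hm : m ≤ n) (hP : P m) :
    P (Nat.findGreatest P n) ∧ Nat.findGreatest P n ≤ n ∧
      ∀ t, Nat.findGreatest P n < t → t ≤ n → ¬ P t :=
  ⟨Nat.findGreatest_spec hm hP, Nat.findGreatest_le _,
    fun t h1 h2 => Nat.findGreatest_is_greatest h1 h2⟩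

lemma swap_exists {a b : List ℕ} (hlen : a.length = b.length)
    (hmono : ∀ k c, cnt a k c ≤ cnt b k c)
    (htot : ∀ c, cnt a a.length c = cnt b b.length c)
    (hab : a ≠ b) :
    ∃ a', LSwapStep a a' ∧ a'.length = b.length ∧
      (∀ k c, cnt a' k c ≤ cnt b k c) ∧
      (∀ c, cnt a' a'.length c = cnt b b.length c) ∧
      (∑ k ∈ Finset.range b.length, ∑ d ∈ Finset.range (b.sum + 1), (cnt b k d - cnt a' k d)) + 1
        ≤ ∑ k ∈ Finset.range b.length, ∑ d ∈ Finset.range (b.sum + 1), (cnt b k d - cnt a k d) := by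
  classical
  have hne : ∃ t, t < b.length ∧ ¬ a.getD t 0 = b.getD t 0 := by
    by_contra h
    push_neg at h
    apply hab
    apply list_eq_of_getD hlen
    intro t
    by_cases ht : t < b.length
    · exact h t ht
    · rw [List.getD_eq_default _ _ (by omega), List.getD_eq_default _ _ (by omega)]
  obtain ⟨t', ht'1, ht'2⟩ := hne
  obtain ⟨hPi, hin', hgr⟩ := findGreatest_facts (P := fun t => ¬ a.getD t 0 = b.getD t 0)
    (le_of_lt ht'1) ht'2
  set i := Nat.findGreatest (fun t => ¬ a.getD t 0 = b.getD t 0) b.length with hidef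
  have hin : i < b.length := by
    rcases eq_or_lt_of_le hin' with he | h
    · exfalso
      apply hPi
      rw [he, List.getD_eq_default _ _ (by omega), List.getD_eq_default _ _ (by omega)]
    · exact h
  have hlast : ∀ t, i < t → a.getD t 0 = b.getD t 0 := by
    intro t ht
    by_cases htn : t ≤ b.length
    · by_contra hc
      exact hgr t ht htn hc
    · rw [List.getD_eq_default _ _ (by omega), List.getD_eq_default _ _ (by omega)]
  have hEqTop : ∀ c, cnt a (i + 1) c = cnt b (i + 1) c := by
    intro c
    have ha1 := cnt_split a c (show i + 1 ≤ a.length by omega)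
    have hb1 := cnt_split b c (show i + 1 ≤ b.length by omega)
    rw [hlen] at ha1
    have hS : (∑ t ∈ Finset.Ico (i + 1) b.length, if c ≤ a.getD t 0 then 1 else 0)
        = ∑ t ∈ Finset.Ico (i + 1) b.length, if c ≤ b.getD t 0 then 1 else 0 := by
      apply Finset.sum_congr rfl
      intro t ht
      simp only [Finset.mem_Ico] at ht
      rw [hlast t (by omega)]
    have ht2 := htot c
    rw [hlen] at ht2
    omega
  have hstep : ∀ c, cnt a i c + (if c ≤ a.getD i 0 then 1 else 0)
      = cnt b i c + (if c ≤ b.getD i 0 then 1 else 0) := by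
    intro c
    have := hEqTop c
    rwa [cnt_succ, cnt_succ] at this
  have hvab : b.getD i 0 < a.getD i 0 := by
    rcases Nat.lt_or_ge (a.getD i 0) (b.getD i 0) with h | h
    · exfalso
      have h1 := hstep (a.getD i 0 + 1)
      have h2 := hmono i (a.getD i 0 + 1)
      rw [if_neg (by omega), if_pos (by omega)] at h1
      omega
    · omega
  have hkey1 : ∀ c, b.getD i 0 < c → c ≤ a.getD i 0 → cnt b i c = cnt a i c + 1 := by
    intro c h1 h2
    have := hstep c
    rw [if_pos h2, if_neg (by omega)] at this
    omega
  have hwit : ∃ t, t < i ∧ b.getD i 0 ≤ a.getD t 0 ∧ a.getD t 0 < a.getD i 0 := by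
    by_contra hno
    push_neg at hno
    have hcc : cnt a i (b.getD i 0) = cnt a i (a.getD i 0) := by
      apply Finset.sum_congr rfl
      intro t ht
      simp only [Finset.mem_range] at ht
      have := hno t (by omega)
      split_ifs <;> omega
    have h1 := hstep (b.getD i 0)
    rw [if_pos (show b.getD i 0 ≤ a.getD i 0 by omega), if_pos (le_refl (b.getD i 0))] at h1
    have h2 := hkey1 (a.getD i 0) (by omega) (le_refl _)
    have h3 := cnt_anti b i (show b.getD i 0 ≤ a.getD i 0 by omega)
    omega
  obtain ⟨t1, ht1i, ht1l, ht1u⟩ := hwit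
  have hi1 : 1 ≤ i := by omega
  obtain ⟨hQt0, ht0le, hgr2⟩ := findGreatest_facts
    (P := fun t => b.getD i 0 ≤ a.getD t 0 ∧ a.getD t 0 < a.getD i 0)
    (show t1 ≤ i - 1 by omega) ⟨ht1l, ht1u⟩
  set t0 := Nat.findGreatest
    (fun t => b.getD i 0 ≤ a.getD t 0 ∧ a.getD t 0 < a.getD i 0) (i - 1) with ht0def
  have ht0i : t0 < i := by omega
  have hmaxQ : ∀ s, t0 < s → s < i →
      ¬ (b.getD i 0 ≤ a.getD s 0 ∧ a.getD s 0 < a.getD i 0) := fun s hs1 hs2 =>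
    hgr2 s hs1 (by omega)
  obtain ⟨hvtl, hvtu⟩ := hQt0
  have hkey : ∀ k c, t0 < k → k ≤ i → a.getD t0 0 < c → c ≤ a.getD i 0 →
      cnt a k c + 1 ≤ cnt b k c := by
    intro k c hk1 hk2 hc1 hc2
    by_contra hcon
    obtain ⟨hRK, hKi, hgr3⟩ := findGreatest_facts
      (P := fun k' => t0 < k' ∧ cnt b k' c ≤ cnt a k' c) hk2 ⟨hk1, by omega⟩
    set K := Nat.findGreatest (fun k' => t0 < k' ∧ cnt b k' c ≤ cnt a k' c) i with hKdef
    have hKlt : K < i := by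
      rcases eq_or_lt_of_le hKi with he | h
      · exfalso
        have h5 := hRK.2
        rw [he] at h5
        have := hkey1 c (by omega) hc2
        omega
      · exact h
    have hKt0 : t0 < K := hRK.1
    have h3 : cnt a (K + 1) c + 1 ≤ cnt b (K + 1) c := by
      by_contra hc3
      exact hgr3 (K + 1) (show K < K + 1 by omega) (show K + 1 ≤ i by omega)
        ⟨by omega, by omega⟩
    have e1 := cnt_succ a K c
    have e2 := cnt_succ b K c
    have e3 : cnt b K c = cnt a K c := le_antisymm hRK.2 (hmono K c)
    have hIb : c ≤ b.getD K 0 := by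
      by_contra h5
      rw [if_neg h5] at e2
      split_ifs at e1 <;> omega
    have hIa : ¬ c ≤ a.getD K 0 := by
      intro h4
      rw [if_pos h4] at e1
      rw [if_pos hIb] at e2
      omega
    have hKtype : a.getD K 0 < b.getD i 0 := by
      have h6 : ¬ (b.getD i 0 ≤ a.getD K 0 ∧ a.getD K 0 < a.getD i 0) := hmaxQ K hKt0 hKlt
      omega
    have hA1 := cnt_split a (b.getD i 0) (show K ≤ i + 1 by omega)
    have hA2 := cnt_split b (b.getD i 0) (show K ≤ i + 1 by omega)
    have hA3 := hmono K (b.getD i 0)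
    have hA4 := hEqTop (b.getD i 0)
    have hB1 := cnt_split a c (show K + 1 ≤ i + 1 by omega)
    have hB2 := cnt_split b c (show K + 1 ≤ i + 1 by omega)
    have hB0 : cnt b (K + 1) c = cnt a (K + 1) c + 1 := by
      rw [if_neg hIa] at e1
      rw [if_pos hIb] at e2
      omega
    have hB3 := hEqTop c
    have hC : (∑ t ∈ Finset.Ico (K + 1) (i + 1), if b.getD i 0 ≤ a.getD t 0 then 1 else 0)
        = ∑ t ∈ Finset.Ico (K + 1) (i + 1), if c ≤ a.getD t 0 then 1 else 0 := by
      apply Finset.sum_congr rfl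
      intro t ht
      simp only [Finset.mem_Ico] at ht
      rcases eq_or_lt_of_le (show t ≤ i by omega) with he | hti
      · rw [he, if_pos (by omega), if_pos (by omega)]
      · have h7 : ¬ (b.getD i 0 ≤ a.getD t 0 ∧ a.getD t 0 < a.getD i 0) :=
          hmaxQ t (by omega) hti
        split_ifs <;> omega
    have hD1 : (∑ t ∈ Finset.Ico (K + 1) (i + 1), if b.getD i 0 ≤ b.getD t 0 then 1 else 0)
        = (∑ t ∈ Finset.Ico (K + 1) i, if b.getD i 0 ≤ b.getD t 0 then 1 else 0)
          + (if b.getD i 0 ≤ b.getD i 0 then 1 else 0) := Finset.sum_Ico_succ_top (by omega) _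
    have hD2 : (∑ t ∈ Finset.Ico (K + 1) (i + 1), if c ≤ b.getD t 0 then 1 else 0)
        = (∑ t ∈ Finset.Ico (K + 1) i, if c ≤ b.getD t 0 then 1 else 0)
          + (if c ≤ b.getD i 0 then 1 else 0) := Finset.sum_Ico_succ_top (by omega) _
    have hD3 : (∑ t ∈ Finset.Ico (K + 1) i, if c ≤ b.getD t 0 then 1 else 0)
        ≤ ∑ t ∈ Finset.Ico (K + 1) i, if b.getD i 0 ≤ b.getD t 0 then 1 else 0 := by
      apply Finset.sum_le_sum
      intro t _
      split_ifs <;> omega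
    have hD4 : (if b.getD i 0 ≤ b.getD i 0 then 1 else 0) = 1 := if_pos (le_refl _)
    have hD5 : (if c ≤ b.getD i 0 then 1 else 0) = 0 := if_neg (by omega)
    have hE1 : (∑ t ∈ Finset.Ico K (i + 1), if b.getD i 0 ≤ a.getD t 0 then 1 else 0)
        = (if b.getD i 0 ≤ a.getD K 0 then 1 else 0)
          + ∑ t ∈ Finset.Ico (K + 1) (i + 1), if b.getD i 0 ≤ a.getD t 0 then 1 else 0 :=
      Finset.sum_eq_sum_Ico_succ_bot (by omega) _
    have hE2 : (∑ t ∈ Finset.Ico K (i + 1), if b.getD i 0 ≤ b.getD t 0 then 1 else 0)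
        = (if b.getD i 0 ≤ b.getD K 0 then 1 else 0)
          + ∑ t ∈ Finset.Ico (K + 1) (i + 1), if b.getD i 0 ≤ b.getD t 0 then 1 else 0 :=
      Finset.sum_eq_sum_Ico_succ_bot (by omega) _
    have hE3 : (if b.getD i 0 ≤ a.getD K 0 then 1 else 0) = 0 := if_neg (by omega)
    have hE4 : (if b.getD i 0 ≤ b.getD K 0 then 1 else 0) = 1 := if_pos (by omega)
    omega
  -- construct the swap
  have hswapcond : a.getD t0 0 ≤ a.getD i 0 := by omega
  have hilen : i < a.length := by omega
  have hlen2 : ((a.set t0 (a.getD i 0)).set i (a.getD t0 0)).length = a.length := by simp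
  have hmono' : ∀ k c, cnt ((a.set t0 (a.getD i 0)).set i (a.getD t0 0)) k c ≤ cnt b k c := by
    intro k c
    rw [cnt_swap ht0i hilen hswapcond k c]
    split_ifs with h
    · exact hkey k c h.1 h.2.1 h.2.2.1 h.2.2.2
    · simpa using hmono k c
  have htot' : ∀ c, cnt ((a.set t0 (a.getD i 0)).set i (a.getD t0 0))
      ((a.set t0 (a.getD i 0)).set i (a.getD t0 0)).length c = cnt b b.length c := by
    intro c
    rw [hlen2, cnt_swap ht0i hilen hswapcond a.length c, if_neg (by omega), add_zero]
    exact htot c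
  have hvasum : a.getD i 0 ≤ b.sum := by
    have h8 : 1 ≤ cnt a a.length (a.getD i 0) := by
      have h8a := Finset.single_le_sum
        (f := fun t => if a.getD i 0 ≤ a.getD t 0 then 1 else 0)
        (fun t _ => Nat.zero_le _)
        (show i ∈ Finset.range a.length by simp only [Finset.mem_range]; omega)
      simp only [le_refl, if_true] at h8a
      rw [cnt]
      exact h8a
    have h9 := htot (a.getD i 0)
    have h10 : ∃ t ∈ Finset.range b.length,
        (if a.getD i 0 ≤ b.getD t 0 then 1 else 0) ≠ 0 := by
      by_contra h11
      push_neg at h11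
      have h12 : cnt b b.length (a.getD i 0) = 0 :=
        Finset.sum_eq_zero (fun x hx => by have := h11 x hx; omega)
      omega
    obtain ⟨t, htm, htv⟩ := h10
    simp only [Finset.mem_range] at htm
    have h12 : a.getD i 0 ≤ b.getD t 0 := by
      by_contra h13
      rw [if_neg h13] at htv
      exact htv rfl
    have h13 : b.getD t 0 ≤ b.sum := by
      rw [List.getD_eq_getElem _ _ htm]
      exact List.single_le_sum (fun x _ => Nat.zero_le x) _ (List.getElem_mem htm)
    omega
  have hphi : (∑ k ∈ Finset.range b.length, ∑ d ∈ Finset.range (b.sum + 1),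
        (cnt b k d - cnt ((a.set t0 (a.getD i 0)).set i (a.getD t0 0)) k d))
      < ∑ k ∈ Finset.range b.length, ∑ d ∈ Finset.range (b.sum + 1),
        (cnt b k d - cnt a k d) := by
    apply Finset.sum_lt_sum
    · intro k _
      apply Finset.sum_le_sum
      intro d _
      rw [cnt_swap ht0i hilen hswapcond k d]
      split_ifs <;> omega
    · refine ⟨i, by simp only [Finset.mem_range]; omega, ?_⟩
      apply Finset.sum_lt_sum
      · intro d _
        rw [cnt_swap ht0i hilen hswapcond i d]
        split_ifs <;> omega
      · refine ⟨a.getD i 0, by simp only [Finset.mem_range]; omega, ?_⟩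
        have hswap := cnt_swap ht0i hilen hswapcond i (a.getD i 0)
        rw [if_pos ⟨ht0i, le_refl i, by omega, le_refl _⟩] at hswap
        have h14 := hmono' i (a.getD i 0)
        rw [hswap] at h14 ⊢
        omega
  exact ⟨(a.set t0 (a.getD i 0)).set i (a.getD t0 0),
    ⟨t0, i, ht0i, hilen, hswapcond, rfl⟩, by omega, hmono', htot', by omega⟩

lemma cond_to_swaps (b : List ℕ) : ∀ (N : ℕ) (a : List ℕ), a.length = b.length →
    (∀ k c, cnt a k c ≤ cnt b k c) →
    (∀ c, cnt a a.length c = cnt b b.length c) →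
    (∑ k ∈ Finset.range b.length, ∑ d ∈ Finset.range (b.sum + 1), (cnt b k d - cnt a k d)) ≤ N →
    Relation.ReflTransGen LSwapStep a b := by
  intro N
  induction N with
  | zero =>
    intro a hlen hmono htot hphi
    by_cases hab : a = b
    · rw [hab]
    · obtain ⟨a', -, -, -, -, hdec⟩ := swap_exists hlen hmono htot hab
      omega
  | succ N IH =>
    intro a hlen hmono htot hphi
    by_cases hab : a = b
    · rw [hab]
    · obtain ⟨a', hstep, hlen', hmono', htot', hdec⟩ := swap_exists hlen hmono htot hab
      exact Relation.ReflTransGen.head hstep (IH a' hlen' hmono' htot' (by omega))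

lemma rtg_kcnt {K K' : Finset (ℕ × ℕ)} (h : Relation.ReflTransGen KMove K K') :
    ∀ k c, kcnt K k c ≤ kcnt K' k c := by
  induction h with
  | refl => exact fun k c => le_refl _
  | tail h1 h2 ih => exact fun k c => le_trans (ih k c) (kmove_kcnt h2 k c)

lemma rtg_kctot {K K' : Finset (ℕ × ℕ)} (h : Relation.ReflTransGen KMove K K') :
    ∀ c, kctot K c = kctot K' c := by
  induction h with
  | refl => exact fun c => rfl
  | tail h1 h2 ih => exact fun c => (ih c).trans (kmove_kctot h2 c)

end Stmt3Aux

theorem stmt3 (a b : List ℕ) (hlen : a.length = b.length) :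
    Relation.ReflTransGen LSwapStep a b ↔
      Relation.ReflTransGen KMove (skyline a) (skyline b) := by
  constructor
  · intro h
    induction h with
    | refl => exact Relation.ReflTransGen.refl
    | @tail m f h1 h2 ih =>
      obtain ⟨i, j, hij, hjn, hle, rfl⟩ := h2
      have hlm : a.length = m.length := by simpa using hlen
      exact (ih hlm).trans (Stmt3Aux.swap_to_kmoves ⟨i, j, hij, hjn, hle, rfl⟩)
  · intro h
    have hmonoK := Stmt3Aux.rtg_kcnt h
    have htotK := Stmt3Aux.rtg_kctot h
    have htot : ∀ c, Stmt3Aux.cnt a a.length c = Stmt3Aux.cnt b b.length c := by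
      intro c
      rcases Nat.eq_zero_or_pos c with rfl | hc
      · rw [Stmt3Aux.cnt_zero_col, Stmt3Aux.cnt_zero_col, hlen]
      · rw [← Stmt3Aux.kctot_skyline hc, ← Stmt3Aux.kctot_skyline hc]
        exact htotK c
    have hmono : ∀ k c, Stmt3Aux.cnt a k c ≤ Stmt3Aux.cnt b k c := by
      intro k c
      rcases Nat.eq_zero_or_pos c with rfl | hc
      · rw [Stmt3Aux.cnt_zero_col, Stmt3Aux.cnt_zero_col]
      · rcases Nat.le_total k a.length with hk | hk
        · rw [← Stmt3Aux.kcnt_skyline hc hk,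
            ← Stmt3Aux.kcnt_skyline hc (show k ≤ b.length by omega)]
          exact hmonoK k c
        · have h0 : ¬ c = 0 := by omega
          rw [Stmt3Aux.cnt_high hk, Stmt3Aux.cnt_high (show b.length ≤ k by omega),
            if_neg h0, if_neg h0, add_zero, add_zero]
          exact le_of_eq (htot c)
    exact Stmt3Aux.cond_to_swaps b
      (∑ k ∈ Finset.range b.length, ∑ d ∈ Finset.range (b.sum + 1),
        (Stmt3Aux.cnt b k d - Stmt3Aux.cnt a k d)) a hlen hmono htot (le_refl _)
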